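/- Let f : ℝ^n → ℝ be differentiable with antitone gradient (DR property) and monotone (x ⪯ y implies f(x) ≤ f(y)) on ℝ₊^n. Then for all x, y ∈ ℝ₊^n, f(y) - f(x) ≤ ⟨∇f(x), y⟩. -/

import Mathlib

open RealInnerProductSpace

theorem stmt_6 (n : ℕ) (f : EuclideanSpace ℝ (Fin n) → ℝ)
    (hdiff : Differentiable ℝ f)
    (hDR : ∀ x y : EuclideanSpace ℝ (Fin n), (∀ i, 0 ≤ x i) → (∀ i, 0 ≤ y i) →
      (∀ i, x i ≤ y i) → ∀ i, gradient f y i ≤ gradient f x i)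
    (hmono : ∀ x y : EuclideanSpace ℝ (Fin n), (∀ i, 0 ≤ x i) → (∀ i, 0 ≤ y i) →
      (∀ i, x i ≤ y i) → f x ≤ f y)
    (x y : EuclideanSpace ℝ (Fin n)) (hx : ∀ i, 0 ≤ x i) (hy : ∀ i, 0 ≤ y i) :
    f y - f x ≤ ⟪gradient f x, y⟫ := by
  classical
  -- fderiv applied = inner with gradient
  have hfd : ∀ (p v : EuclideanSpace ℝ (Fin n)), fderiv ℝ f p v = ⟪gradient f p, v⟫ := by
    intro p v
    rw [gradient, InnerProductSpace.toDual_symm_apply]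
  -- derivative along a line
  have hline : ∀ (p v : EuclideanSpace ℝ (Fin n)) (t : ℝ),
      HasDerivAt (fun s : ℝ => f (p + s • v)) (fderiv ℝ f (p + t • v) v) t := by
    intro p v t
    have h1 : HasDerivAt (fun s : ℝ => p + s • v) v t := by
      simpa using ((hasDerivAt_id t).smul_const v).const_add p
    exact (hdiff (p + t • v)).hasFDerivAt.comp_hasDerivAt t h1
  -- gradient is nonneg on the positive orthant
  have hgradnn : ∀ p : EuclideanSpace ℝ (Fin n), (∀ i, 0 ≤ p i) → ∀ i, 0 ≤ gradient f p i := by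
    intro p hp i
    set v : EuclideanSpace ℝ (Fin n) := EuclideanSpace.single i (1 : ℝ) with hv
    have hd : HasDerivAt (fun s : ℝ => f (p + s • v)) (fderiv ℝ f p v) 0 := by
      have := hline p v 0
      rwa [zero_smul, add_zero] at this
    have htend := (hasDerivAt_iff_tendsto_slope.1 hd).mono_left
      (nhdsWithin_mono 0 (show Set.Ioi (0:ℝ) ⊆ {(0:ℝ)}ᶜ from fun t ht => ne_of_gt ht))
    have hslope : ∀ᶠ t in nhdsWithin (0 : ℝ) (Set.Ioi 0),
        0 ≤ slope (fun s : ℝ => f (p + s • v)) 0 t := by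
      filter_upwards [self_mem_nhdsWithin] with t ht
      have ht0 : (0 : ℝ) < t := ht
      have hle : f (p + (0 : ℝ) • v) ≤ f (p + t • v) := by
        apply hmono
        · intro j; simpa using hp j
        · intro j
          have : 0 ≤ t * v j := by
            apply mul_nonneg ht0.le
            rw [hv, EuclideanSpace.single_apply]
            positivity
          simpa using add_nonneg (hp j) this
        · intro j
          have : 0 ≤ t * v j := by
            apply mul_nonneg ht0.le
            rw [hv, EuclideanSpace.single_apply]
            positivity
          simpa using this
      rw [slope_def_field]
      apply div_nonneg _ (by simpa using ht0.le)
      simpa using sub_nonneg.2 hle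
    have h0 : 0 ≤ fderiv ℝ f p v := ge_of_tendsto htend hslope
    rw [hfd, hv, EuclideanSpace.inner_single_right] at h0
    simpa using h0
  -- the entrywise max and the direction
  set z : EuclideanSpace ℝ (Fin n) := WithLp.toLp 2 (fun i => max (x i) (y i)) with hzdef
  have hz : ∀ i, 0 ≤ z i := fun i => le_trans (hx i) (le_max_left _ _)
  set d : EuclideanSpace ℝ (Fin n) := z - x with hddef
  have hd_apply : ∀ i, d i = max (x i) (y i) - x i := by
    intro i; rw [hddef]; simp [hzdef]
  have hdnn : ∀ i, 0 ≤ d i := by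
    intro i; rw [hd_apply]; simp [le_max_left]
  have hdy : ∀ i, d i ≤ y i := by
    intro i
    rw [hd_apply]
    rcases le_total (x i) (y i) with h | h
    · rw [max_eq_right h]; linarith [hx i]
    · rw [max_eq_left h]; simpa using hy i
  -- points on segment stay in orthant and dominate x
  have hseg : ∀ t : ℝ, 0 ≤ t → (∀ i, x i ≤ (x + t • d) i) ∧ (∀ i, 0 ≤ (x + t • d) i) := by
    intro t ht
    constructor
    · intro i
      have : 0 ≤ t * d i := mul_nonneg ht (hdnn i)
      simpa using this
    · intro i
      have : 0 ≤ t * d i := mul_nonneg ht (hdnn i)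
      have := add_nonneg (hx i) this
      simpa using this
  set C : ℝ := ⟪gradient f x, d⟫ with hC
  -- derivative bound on segment
  have hderle : ∀ t : ℝ, 0 ≤ t → fderiv ℝ f (x + t • d) d ≤ C := by
    intro t ht
    rw [hfd, hC]
    rw [PiLp.inner_apply, PiLp.inner_apply]
    apply Finset.sum_le_sum
    intro i _
    have h1 : gradient f (x + t • d) i ≤ gradient f x i :=
      hDR x (x + t • d) hx (hseg t ht).2 (hseg t ht).1 i
    simp only [RCLike.inner_apply, conj_trivial]
    exact mul_le_mul_of_nonneg_left h1 (hdnn i)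
  -- f z - f x ≤ C via mean value type argument
  set φ : ℝ → ℝ := fun t => f (x + t • d) - t * C with hφ
  have hφd : ∀ t : ℝ, HasDerivAt φ (fderiv ℝ f (x + t • d) d - C) t := by
    intro t
    have h2 : HasDerivAt (fun s : ℝ => s * C) C t := by simpa using (hasDerivAt_id t).mul_const C
    exact (hline x d t).sub h2
  have hanti : AntitoneOn φ (Set.Icc (0 : ℝ) 1) := by
    apply antitoneOn_of_deriv_nonpos (convex_Icc 0 1)
    · exact Continuous.continuousOn (by
        exact continuous_iff_continuousAt.2 fun t => (hφd t).continuousAt)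
    · intro t _
      exact ((hφd t).differentiableAt).differentiableWithinAt
    · intro t ht
      rw [(hφd t).deriv]
      rw [interior_Icc] at ht
      exact sub_nonpos.2 (hderle t ht.1.le)
  have hφ10 : φ 1 ≤ φ 0 := hanti (by norm_num) (by norm_num) zero_le_one
  have hz_eq : x + (1 : ℝ) • d = z := by
    rw [hddef]; simp
  have hfzfx : f z - f x ≤ C := by
    have := hφ10
    rw [hφ] at this
    simp only [one_smul, zero_smul, add_zero, one_mul, zero_mul, sub_zero] at this
    rw [hddef] at this
    simp only [add_sub_cancel] at this
    linarith
  -- f y ≤ f z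
  have hyz : f y ≤ f z := by
    apply hmono y z hy hz
    intro i
    exact le_max_right _ _
  -- C ≤ ⟪gradient f x, y⟫
  have hCle : C ≤ ⟪gradient f x, y⟫ := by
    rw [hC, PiLp.inner_apply, PiLp.inner_apply]
    apply Finset.sum_le_sum
    intro i _
    simp only [RCLike.inner_apply, conj_trivial]
    exact mul_le_mul_of_nonneg_right (hdy i) (hgradnn x hx i)
  linarith
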